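/- Let X ∈ {0,1}^{n×n} be the adjacency matrix of a directed Hamiltonian cycle on n ≥ 3 nodes and set Z = β I_n + α J_n − (1/2)(X + Xᵀ), where β ≥ cos(2π/n) and α ≥ (1 − cos(2π/n))/n. Then Z is positive semidefinite. -/

import Mathlib

open Matrix

section Aux
open Finset AddChar ZMod Complex

lemma cos_aux {n m : ℕ} (hn : 3 ≤ n) (h1 : 1 ≤ m) (h2 : 2 * m ≤ n) :
    Real.cos (2 * Real.pi * m / n) ≤ Real.cos (2 * Real.pi / n) := by
  have hn0 : (0:ℝ) < n := by positivity
  have hpi := Real.pi_pos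
  have hm1 : (1:ℝ) ≤ m := by exact_mod_cast h1
  have hmn : (2:ℝ) * m ≤ n := by exact_mod_cast h2
  apply Real.cos_le_cos_of_nonneg_of_le_pi
  · positivity
  · rw [div_le_iff₀ hn0]; nlinarith
  · rw [div_le_div_iff₀ hn0 hn0]
    have h3 : (n:ℝ) ≤ m * n := by nlinarith
    nlinarith [mul_nonneg hpi.le (sub_nonneg.mpr h3)]

lemma cos_bound {n m : ℕ} (hn : 3 ≤ n) (h1 : 1 ≤ m) (h2 : m < n) :
    Real.cos (2 * Real.pi * m / n) ≤ Real.cos (2 * Real.pi / n) := by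
  rcases le_or_gt (2 * m) n with h | h
  · exact cos_aux hn h1 h
  · have hn0 : (0:ℝ) < n := by positivity
    have hm' : 1 ≤ n - m := by omega
    have h2' : 2 * (n - m) ≤ n := by omega
    have hc : ((n - m : ℕ) : ℝ) = (n:ℝ) - m := by
      push_cast [Nat.cast_sub h2.le]; ring
    have heq : Real.cos (2 * Real.pi * m / n) = Real.cos (2 * Real.pi * (n - m : ℕ) / n) := by
      rw [hc]
      have : 2 * Real.pi * ((n:ℝ) - m) / n = 2 * Real.pi - 2 * Real.pi * m / n := by
        field_simp
      rw [this, Real.cos_two_pi_sub]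
    rw [heq]
    exact cos_aux hn hm' h2'

open Finset AddChar ZMod Complex

lemma key_zmod {n : ℕ} [NeZero n] (hn : 3 ≤ n) (y : ZMod n → ℝ) :
    ∑ j, y j * y (j + 1) ≤
      Real.cos (2 * Real.pi / n) * ∑ j, y j ^ 2
        + ((1 - Real.cos (2 * Real.pi / n)) / n) * (∑ j, y j) ^ 2 := by
  haveI : NeZero n := ⟨by omega⟩
  set c := Real.cos (2 * Real.pi / n) with hc
  set ψ := (stdAddChar (N := n)) with hψ
  set Y : ZMod n → ℂ := fun k => ∑ j, (y j : ℂ) * ψ (j * k) with hY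
  -- orthogonality
  have orth : ∀ t : ZMod n, ∑ k : ZMod n, ψ (t * k) = if t = 0 then (n : ℂ) else 0 := by
    intro t
    split_ifs with h
    · simp [h, Finset.card_univ]
    · exact sum_eq_zero_of_ne_one (isPrimitive_stdAddChar n h)
  have habs : ∀ m : ZMod n, ‖ψ m‖ = 1 := by
    intro m; rw [hψ, stdAddChar_apply]; exact Circle.norm_coe _
  have hconj : ∀ m : ZMod n, (starRingEnd ℂ) (ψ m) = ψ (-m) := by
    intro m
    have h1 : ψ m * ψ (-m) = 1 := by rw [← map_add_eq_mul]; simp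
    rw [← Complex.inv_eq_conj (habs m)]
    exact inv_eq_of_mul_eq_one_right h1
  have hconjY : ∀ k, (starRingEnd ℂ) (Y k) = ∑ j, (y j : ℂ) * ψ (-(j * k)) := by
    intro k
    rw [hY, map_sum]
    exact Finset.sum_congr rfl fun j _ => by rw [_root_.map_mul, Complex.conj_ofReal, hconj]
  have main : ∀ t : ZMod n, ∑ k, Y k * (starRingEnd ℂ) (Y k) * ψ (t * k)
      = (n : ℂ) * ∑ j, (y j : ℂ) * (y (j + t) : ℂ) := by
    intro t
    have step1 : ∀ k, Y k * (starRingEnd ℂ) (Y k) * ψ (t * k)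
        = ∑ j, ∑ j', (y j : ℂ) * (y j' : ℂ) * ψ ((j - j' + t) * k) := by
      intro k
      rw [hY, hconjY, Finset.sum_mul_sum, Finset.sum_mul]
      refine Finset.sum_congr rfl fun j _ => ?_
      rw [Finset.sum_mul]
      refine Finset.sum_congr rfl fun j' _ => ?_
      have : ψ ((j - j' + t) * k) = ψ (j * k) * ψ (-(j' * k)) * ψ (t * k) := by
        rw [← map_add_eq_mul, ← map_add_eq_mul]; congr 1; ring
      rw [this]; ring
    calc ∑ k, Y k * (starRingEnd ℂ) (Y k) * ψ (t * k)
        = ∑ k, ∑ j, ∑ j', (y j : ℂ) * (y j' : ℂ) * ψ ((j - j' + t) * k) := by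
          exact Finset.sum_congr rfl fun k _ => step1 k
      _ = ∑ j, ∑ j', ∑ k : ZMod n, (y j : ℂ) * (y j' : ℂ) * ψ ((j - j' + t) * k) := by
          rw [Finset.sum_comm]
          exact Finset.sum_congr rfl fun j _ => Finset.sum_comm
      _ = ∑ j, ∑ j' : ZMod n, (y j : ℂ) * (y j' : ℂ) * (if j - j' + t = 0 then (n : ℂ) else 0) := by
          refine Finset.sum_congr rfl fun j _ => Finset.sum_congr rfl fun j' _ => ?_
          rw [← Finset.mul_sum, orth]
      _ = ∑ j, ∑ j' : ZMod n, (if j' = j + t then (y j : ℂ) * (y j' : ℂ) * (n : ℂ) else 0) := by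
          refine Finset.sum_congr rfl fun j _ => Finset.sum_congr rfl fun j' _ => ?_
          have hiff : j - j' + t = 0 ↔ j' = j + t := by
            rw [show j - j' + t = j + t - j' by ring, sub_eq_zero, eq_comm]
          rw [mul_ite, mul_zero, if_congr hiff rfl rfl]
      _ = ∑ j, (y j : ℂ) * (y (j + t) : ℂ) * (n : ℂ) := by
          refine Finset.sum_congr rfl fun j _ => ?_
          simp [Finset.sum_ite_eq']
      _ = (n : ℂ) * ∑ j, (y j : ℂ) * (y (j + t) : ℂ) := by
          rw [Finset.mul_sum]; exact Finset.sum_congr rfl fun j _ => by ring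
  have hn0 : (0:ℝ) < n := by
    have : 0 < n := by omega
    positivity
  -- Parseval (t = 0)
  have hA : ∑ k, Complex.normSq (Y k) = (n:ℝ) * ∑ j, y j * y j := by
    have h0 := main 0
    simp only [zero_mul, map_zero_eq_one, mul_one, add_zero, Complex.mul_conj] at h0
    exact_mod_cast h0
  -- t = 1
  have hB : ∑ k, Complex.normSq (Y k) * (ψ k).re = (n:ℝ) * ∑ j, y j * y (j + 1) := by
    have h1 := main 1
    simp only [one_mul, Complex.mul_conj] at h1
    have h2 := congrArg Complex.re h1
    simpa [Complex.mul_re, Complex.ofReal_sum] using h2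
  have hP0 : Complex.normSq (Y 0) = (∑ j, y j) * (∑ j, y j) := by
    have hY0 : Y 0 = ((∑ j, y j : ℝ) : ℂ) := by
      rw [hY]
      push_cast
      refine Finset.sum_congr rfl fun j _ => ?_
      rw [mul_zero, map_zero_eq_one, mul_one]
    rw [hY0, Complex.normSq_ofReal]
  have hr : ∀ k : ZMod n, (ψ k).re = Real.cos (2 * Real.pi * k.val / n) := by
    intro k
    have h1 : ψ k = Complex.exp (2 * Real.pi * Complex.I * (k.val : ℂ) / n) := by
      have h2 := ZMod.stdAddChar_coe (N := n) (k.val : ℤ)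
      have h3 : (((k.val : ℤ)) : ZMod n) = k := by
        push_cast
        exact ZMod.natCast_rightInverse k
      rw [h3] at h2
      rw [hψ, h2]
      norm_num
    have harg : 2 * Real.pi * Complex.I * (k.val : ℂ) / n
        = ((2 * Real.pi * k.val / n : ℝ) : ℂ) * Complex.I := by
      push_cast; ring
    rw [h1, harg, Complex.exp_ofReal_mul_I_re]
  have hc1 : c ≤ 1 := by rw [hc]; exact Real.cos_le_one _
  have hbound : ∀ k : ZMod n, Complex.normSq (Y k) * (ψ k).re
      ≤ c * Complex.normSq (Y k) + (if k = 0 then (1 - c) * Complex.normSq (Y k) else 0) := by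
    intro k
    by_cases hk : k = 0
    · subst hk
      rw [if_pos rfl]
      have : (ψ (0 : ZMod n)).re = 1 := by rw [map_zero_eq_one]; simp
      rw [this]; ring_nf; linarith [le_refl (Complex.normSq (Y 0))]
    · rw [if_neg hk, add_zero]
      have h1 : (ψ k).re ≤ c := by
        rw [hr k, hc]
        apply cos_bound hn
        · have hv : k.val ≠ 0 := fun h => hk ((ZMod.val_eq_zero k).mp h)
          omega
        · exact ZMod.val_lt k
      nlinarith [Complex.normSq_nonneg (Y k)]
  have hsum := Finset.sum_le_sum (s := Finset.univ) (fun k _ => hbound k)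
  rw [hB] at hsum
  have hR : ∑ k : ZMod n, (c * Complex.normSq (Y k)
        + (if k = 0 then (1 - c) * Complex.normSq (Y k) else 0))
      = c * ((n:ℝ) * ∑ j, y j * y j) + (1 - c) * ((∑ j, y j) * (∑ j, y j)) := by
    rw [Finset.sum_add_distrib, ← Finset.mul_sum, hA]
    congr 1
    rw [Finset.sum_ite_eq' Finset.univ (0 : ZMod n)
      (fun k => (1 - c) * Complex.normSq (Y k))]
    simp [hP0]
  rw [hR] at hsum
  rw [← mul_le_mul_iff_right₀ hn0]
  have hexp : (n:ℝ) * (c * ∑ j, y j ^ 2 + (1 - c) / n * (∑ j, y j) ^ 2)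
      = c * ((n:ℝ) * ∑ j, y j * y j) + (1 - c) * ((∑ j, y j) * (∑ j, y j)) := by
    have hsq : ∑ j, y j ^ 2 = ∑ j, y j * y j := by
      exact Finset.sum_congr rfl fun j _ => sq (y j) ▸ by ring
    rw [hsq]
    field_simp
  rw [hexp]
  exact hsum

lemma key_perm {n : ℕ} (hn : 3 ≤ n) (σ : Equiv.Perm (Fin n)) (hcyc : σ.IsCycle)
    (hsupp : σ.support = Finset.univ) (x : Fin n → ℝ) :
    ∑ i, x i * x (σ i) ≤
      Real.cos (2 * Real.pi / n) * ∑ i, x i ^ 2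
        + ((1 - Real.cos (2 * Real.pi / n)) / n) * (∑ i, x i) ^ 2 := by
  haveI : NeZero n := ⟨by omega⟩
  set p : Fin n := ⟨0, by omega⟩ with hp
  have horder : orderOf σ = n := by
    rw [hcyc.orderOf, hsupp, Finset.card_univ, Fintype.card_fin]
  have hmove : ∀ z : Fin n, σ z ≠ z := by
    intro z
    have hz : z ∈ σ.support := by rw [hsupp]; exact Finset.mem_univ z
    exact Equiv.Perm.mem_support.mp hz
  set g : ZMod n → Fin n := fun j => (σ ^ j.val) p with hg
  have hinj : Function.Injective g := by
    have key2 : ∀ a b : ℕ, a ≤ b → b < n → (σ ^ a) p = (σ ^ b) p → a = b := by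
      intro a b hab hbn h
      have hsplit : σ ^ (b - a) * σ ^ a = σ ^ b := by
        rw [← pow_add]; congr 1; omega
      have hfix : (σ ^ (b - a)) ((σ ^ a) p) = (σ ^ a) p := by
        rw [← Equiv.Perm.mul_apply, hsplit, ← h]
      have h1 : σ ^ (b - a) = 1 := (hcyc.pow_eq_one_iff' (hmove ((σ ^ a) p))).mpr hfix
      have h2 := orderOf_dvd_of_pow_eq_one h1
      rw [horder] at h2
      have h4 : b - a = 0 := by
        by_contra hne
        have := Nat.le_of_dvd (Nat.pos_of_ne_zero hne) h2
        omega
      omega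
    intro a b hab
    have h1 : a.val < n := ZMod.val_lt a
    have h2 : b.val < n := ZMod.val_lt b
    have : a.val = b.val := by
      rcases le_total a.val b.val with h | h
      · exact key2 _ _ h h2 hab
      · exact (key2 _ _ h h1 hab.symm).symm
    exact ZMod.val_injective n this
  have hbij : Function.Bijective g :=
    (Fintype.bijective_iff_injective_and_card g).mpr
      ⟨hinj, by rw [ZMod.card, Fintype.card_fin]⟩
  have hshift : ∀ j : ZMod n, g (j + 1) = σ (g j) := by
    intro j
    have h1n : 1 % n = 1 := Nat.mod_eq_of_lt (by omega)
    have hv : (j + 1).val = (j.val + 1) % n := by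
      rw [ZMod.val_add, ZMod.val_one_eq_one_mod, h1n]
    have hpow : σ ^ ((j.val + 1) % n) = σ ^ (j.val + 1) := by
      conv_rhs => rw [← pow_mod_orderOf]
      rw [horder]
    show (σ ^ (j + 1).val) p = σ ((σ ^ j.val) p)
    rw [hv, hpow, pow_succ']
    rfl
  set e : ZMod n ≃ Fin n := Equiv.ofBijective g hbij with he
  have h1 : ∑ i, x i * x (σ i) = ∑ j : ZMod n, (x ∘ g) j * (x ∘ g) (j + 1) := by
    rw [← Equiv.sum_comp e (fun i => x i * x (σ i))]
    refine Finset.sum_congr rfl fun j _ => ?_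
    simp only [Function.comp_apply, he, Equiv.ofBijective_apply, hshift j]
  have h2 : ∑ i, x i ^ 2 = ∑ j : ZMod n, (x ∘ g) j ^ 2 :=
    (Equiv.sum_comp e (fun i => x i ^ 2)).symm
  have h3 : ∑ i, x i = ∑ j : ZMod n, (x ∘ g) j :=
    (Equiv.sum_comp e x).symm
  rw [h1, h2, h3]
  exact key_zmod hn (x ∘ g)

end Aux

theorem hamiltonian_cycle_certificate_psd {n : ℕ} (hn : 3 ≤ n)
    (σ : Equiv.Perm (Fin n)) (hcyc : σ.IsCycle) (hsupp : σ.support = Finset.univ)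
    (X : Matrix (Fin n) (Fin n) ℝ)
    (hX : ∀ i j, X i j = if σ i = j then 1 else 0)
    (α β : ℝ) (hβ : Real.cos (2 * Real.pi / n) ≤ β)
    (hα : (1 - Real.cos (2 * Real.pi / n)) / n ≤ α) :
    (β • (1 : Matrix (Fin n) (Fin n) ℝ)
      + α • (Matrix.of fun _ _ => (1 : ℝ))
      - (1 / 2 : ℝ) • (X + Xᵀ)).PosSemidef := by
  have hc1 : Real.cos (2 * Real.pi / n) ≤ 1 := Real.cos_le_one _
  have hn0 : (0:ℝ) < n := by positivity
  rw [Matrix.posSemidef_iff_dotProduct_mulVec]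
  constructor
  · -- Hermitian
    ext i j
    simp only [Matrix.conjTranspose_apply, Matrix.sub_apply, Matrix.add_apply,
      Matrix.smul_apply, Matrix.one_apply, Matrix.of_apply, Matrix.transpose_apply,
      smul_eq_mul, star_trivial]
    have h1 : (if j = i then (1:ℝ) else 0) = (if i = j then 1 else 0) := by
      simp [eq_comm]
    rw [h1]
    ring
  · intro x
    rw [star_trivial]
    have hXv : X *ᵥ x = fun i => x (σ i) := by
      funext i
      simp only [Matrix.mulVec, dotProduct, hX, ite_mul, one_mul, zero_mul]
      exact Finset.sum_ite_eq Finset.univ (σ i) x |>.trans (by simp)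
    have hXtv : Xᵀ *ᵥ x = fun i => x (σ.symm i) := by
      funext i
      simp only [Matrix.mulVec, dotProduct, Matrix.transpose_apply, hX, ite_mul,
        one_mul, zero_mul]
      have : ∀ j : Fin n, (if σ j = i then x j else 0) = (if j = σ.symm i then x j else 0) := by
        intro j
        congr 1
        simp [Equiv.eq_symm_apply, eq_comm]
      rw [Finset.sum_congr rfl fun j _ => this j]
      exact Finset.sum_ite_eq' Finset.univ (σ.symm i) x |>.trans (by simp)
    have hJv : (Matrix.of fun _ _ => (1:ℝ) : Matrix (Fin n) (Fin n) ℝ) *ᵥ x = fun _ => ∑ j, x j := by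
      funext i
      simp [Matrix.mulVec, dotProduct]
    have h1v : (1 : Matrix (Fin n) (Fin n) ℝ) *ᵥ x = x := Matrix.one_mulVec x
    rw [Matrix.sub_mulVec, Matrix.add_mulVec, Matrix.smul_mulVec, Matrix.smul_mulVec,
      Matrix.smul_mulVec, Matrix.add_mulVec, hXv, hXtv, hJv, h1v]
    rw [dotProduct_sub, dotProduct_add, dotProduct_smul,
      dotProduct_smul, dotProduct_smul, dotProduct_add]
    have e1 : x ⬝ᵥ x = ∑ i, x i ^ 2 := by
      simp [dotProduct, sq]
    have e2 : x ⬝ᵥ (fun _ => ∑ j, x j) = (∑ i, x i) ^ 2 := by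
      simp only [dotProduct]
      rw [← Finset.sum_mul, sq]
    have e3 : x ⬝ᵥ (fun i => x (σ i)) = ∑ i, x i * x (σ i) := rfl
    have e4 : x ⬝ᵥ (fun i => x (σ.symm i)) = ∑ i, x i * x (σ i) := by
      simp only [dotProduct]
      rw [← Equiv.sum_comp σ (fun i => x i * x (σ.symm i))]
      exact Finset.sum_congr rfl fun i _ => by rw [Equiv.symm_apply_apply, mul_comm]
    rw [smul_eq_mul, smul_eq_mul, smul_eq_mul, e1, e2, e3, e4]
    have hkey := key_perm hn σ hcyc hsupp x
    have hs1 : (0:ℝ) ≤ ∑ i, x i ^ 2 := Finset.sum_nonneg fun i _ => sq_nonneg _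
    have hs2 : (0:ℝ) ≤ (∑ i, x i) ^ 2 := sq_nonneg _
    have hb1 : Real.cos (2 * Real.pi / n) * ∑ i, x i ^ 2 ≤ β * ∑ i, x i ^ 2 :=
      mul_le_mul_of_nonneg_right hβ hs1
    have hb2 : ((1 - Real.cos (2 * Real.pi / n)) / n) * (∑ i, x i) ^ 2 ≤ α * (∑ i, x i) ^ 2 :=
      mul_le_mul_of_nonneg_right hα hs2
    linarith
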